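/- arXiv:1312.0330 — 4 statements merged into one kernel-verified Lean document; each statement's English description precedes it below -/
import Mathlib

section
/- Let N ≥ 2 be an integer and q = exp(πi/N). For every integer s with 1 ≤ s ≤ N−1, ∑_{l=1}^{s−1} 1/([l]·[s−l]) = [s]⁻¹ · ∑_{l=1}^{s−1} {l}_+/[l]. -/
open Complex Finset

/-- `q = exp(π i / N)`. -/
noncomputable def qq (N : ℕ) : ℂ := Complex.exp (Real.pi * Complex.I / N)

/-- The quantum integer `[k] = (q^k - q^{-k}) / (q - q^{-1})`. -/
noncomputable def qint (N : ℕ) (k : ℤ) : ℂ :=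
  (qq N ^ k - qq N ^ (-k)) / (qq N - (qq N)⁻¹)

lemma qq_ne_zero (N : ℕ) : qq N ≠ 0 := Complex.exp_ne_zero _

lemma braces_ne_zero (N : ℕ) (hN : 2 ≤ N) (k : ℤ) (hk1 : 1 ≤ k) (hk : k ≤ (N:ℤ) - 1) :
    qq N ^ k - qq N ^ (-k) ≠ 0 := by
  intro h
  have hq : qq N ≠ 0 := qq_ne_zero N
  have hqk : qq N ^ k = qq N ^ (-k) := sub_eq_zero.mp h
  have h2k : qq N ^ (2*k) = 1 := by
    rw [two_mul, zpow_add₀ hq]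
    nth_rewrite 2 [hqk]
    rw [← zpow_add₀ hq]
    simp
  have hexp : Complex.exp ((2*k : ℤ) * (Real.pi * Complex.I / N)) = 1 := by
    rw [Complex.exp_int_mul]
    exact h2k
  obtain ⟨n, hn⟩ := Complex.exp_eq_one_iff.mp hexp
  have hN0 : (N:ℂ) ≠ 0 := Nat.cast_ne_zero.mpr (by omega)
  have hπ : (Real.pi : ℂ) ≠ 0 := by exact_mod_cast Real.pi_ne_zero
  have hI := Complex.I_ne_zero
  have hk' : (k:ℂ) = n * N := by
    field_simp at hn
    have h2 : (2:ℂ) * (Real.pi * Complex.I) ≠ 0 :=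
      mul_ne_zero two_ne_zero (mul_ne_zero hπ hI)
    apply mul_left_cancel₀ h2
    push_cast at hn
    linear_combination (↑Real.pi * Complex.I) * hn
  have hkZ : k = n * N := by exact_mod_cast hk'
  have hdvd : (N:ℤ) ∣ k := ⟨n, by linarith⟩
  have := Int.le_of_dvd (by omega) hdvd
  omega

lemma alg1 (c x y : ℂ) (hx : x ≠ 0) (hy : y ≠ 0)
    (h1 : c - c⁻¹ ≠ 0) (h2 : x - x⁻¹ ≠ 0) (h3 : y / x - x / y ≠ 0) (h4 : y - y⁻¹ ≠ 0) :
    1 / (((x - x⁻¹) / (c - c⁻¹)) * ((y / x - x / y) / (c - c⁻¹)))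
      - ((y - y⁻¹) / (c - c⁻¹))⁻¹ * ((x + x⁻¹) / ((x - x⁻¹) / (c - c⁻¹)))
      = (c - c⁻¹) ^ 2 * (x * x / y - y / (x * x)) /
        ((x - x⁻¹) * (y / x - x / y) * (y - y⁻¹)) := by
  set a := x - x⁻¹ with ha
  set b := y / x - x / y with hb
  set e := y - y⁻¹ with he
  set d := c - c⁻¹ with hd
  have hkey : x * x / y - y / (x * x) = e - (x + x⁻¹) * b := by
    rw [ha, hb, he] at *
    field_simp
    ring
  rw [hkey]
  field_simp

lemma alg2 (x y : ℂ) (hx : x ≠ 0) (hy : y ≠ 0) (d : ℂ) :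
    d ^ 2 * (x * x / y - y / (x * x)) /
        ((x - x⁻¹) * (y / x - x / y) * (y - y⁻¹))
      = -(d ^ 2 * (y / x * (y / x) / y - y / (y / x * (y / x))) /
        ((y / x - (y / x)⁻¹) * (y / (y / x) - y / x / y) * (y - y⁻¹))) := by
  have r1 : (y / x)⁻¹ = x / y := inv_div y x
  have r2 : y / (y / x) = x := by
    rw [div_div_eq_mul_div, mul_comm, mul_div_assoc, div_self hy, mul_one]
  have r3 : y / x / y = x⁻¹ := by
    field_simp
  have hkey : y / x * (y / x) / y - y / (y / x * (y / x))
      = -(x * x / y - y / (x * x)) := by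
    field_simp
    ring
  rw [r1, r2, r3, hkey]
  ring

theorem stmt1 (N : ℕ) (hN : 2 ≤ N) (s : ℤ) (hs1 : 1 ≤ s) (hs : s ≤ (N : ℤ) - 1) :
    ∑ l ∈ Finset.Icc 1 (s - 1), 1 / (qint N l * qint N (s - l)) =
      (qint N s)⁻¹ * ∑ l ∈ Finset.Icc 1 (s - 1), (qq N ^ l + qq N ^ (-l)) / qint N l := by
  have hq : qq N ≠ 0 := qq_ne_zero N
  have hb1 : qq N - (qq N)⁻¹ ≠ 0 := by
    have := braces_ne_zero N hN 1 le_rfl (by omega)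
    simpa [zpow_neg] using this
  have hbs : qq N ^ s - (qq N ^ s)⁻¹ ≠ 0 := by
    have := braces_ne_zero N hN s hs1 hs
    rwa [zpow_neg] at this
  have hxs : qq N ^ s ≠ 0 := zpow_ne_zero _ hq
  set g : ℤ → ℂ := fun l =>
    (qq N - (qq N)⁻¹) ^ 2 *
        (qq N ^ l * qq N ^ l / qq N ^ s - qq N ^ s / (qq N ^ l * qq N ^ l)) /
      ((qq N ^ l - (qq N ^ l)⁻¹) *
        (qq N ^ s / qq N ^ l - qq N ^ l / qq N ^ s) * (qq N ^ s - (qq N ^ s)⁻¹))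
    with hg
  rw [Finset.mul_sum, ← sub_eq_zero, ← Finset.sum_sub_distrib]
  have hstep : ∀ l ∈ Finset.Icc 1 (s-1),
      1 / (qint N l * qint N (s-l)) - (qint N s)⁻¹ * ((qq N ^ l + qq N ^ (-l)) / qint N l)
        = g l := by
    intro l hl
    rw [Finset.mem_Icc] at hl
    have hbl : qq N ^ l - (qq N ^ l)⁻¹ ≠ 0 := by
      have := braces_ne_zero N hN l hl.1 (by omega)
      rwa [zpow_neg] at this
    have hbsl : qq N ^ s / qq N ^ l - qq N ^ l / qq N ^ s ≠ 0 := by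
      have := braces_ne_zero N hN (s-l) (by omega) (by omega)
      rwa [zpow_sub₀ hq, neg_sub, zpow_sub₀ hq] at this
    have hx : qq N ^ l ≠ 0 := zpow_ne_zero _ hq
    have e1 : qq N ^ (s - l) = qq N ^ s / qq N ^ l := zpow_sub₀ hq s l
    have e2 : qq N ^ (-(s - l)) = qq N ^ l / qq N ^ s := by
      rw [neg_sub]; exact zpow_sub₀ hq l s
    have e3 : qq N ^ (-l) = (qq N ^ l)⁻¹ := zpow_neg _ l
    have e4 : qq N ^ (-s) = (qq N ^ s)⁻¹ := zpow_neg _ s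
    simp only [hg, qint, e1, e2, e3, e4]
    exact alg1 (qq N) (qq N ^ l) (qq N ^ s) hx hxs hb1 hbl hbsl hbs
  rw [Finset.sum_congr rfl hstep]
  have hrefl : ∑ l ∈ Finset.Icc 1 (s-1), g l = ∑ l ∈ Finset.Icc 1 (s-1), -g l := by
    apply Finset.sum_nbij' (i := fun l => s - l) (j := fun l => s - l)
    · intro a ha; rw [Finset.mem_Icc] at *; omega
    · intro a ha; rw [Finset.mem_Icc] at *; omega
    · intro a _; ring
    · intro a _; ring
    · intro a ha
      rw [Finset.mem_Icc] at ha
      have hx : qq N ^ a ≠ 0 := zpow_ne_zero _ hq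
      have f1 : qq N ^ (s - a) = qq N ^ s / qq N ^ a := zpow_sub₀ hq s a
      have f2 : qq N ^ (s - (s - a)) = qq N ^ a := by rw [show s - (s - a) = a by ring]
      simp only [hg, f1, f2]
      exact alg2 (qq N ^ a) (qq N ^ s) hx hxs _
  have h0 : ∑ l ∈ Finset.Icc 1 (s-1), g l = 0 := by
    have h := hrefl
    rw [Finset.sum_neg_distrib] at h
    linear_combination h / 2
  exact h0
end

section
/- Let N ≥ 2 be an integer and q = exp(πi/N). For every integer s with 1 ≤ s ≤ N−1, −[s]²·( ∑_{l=1}^{s−1} 1/([l]·[s−l]) − ∑_{l=1}^{N−s−1} 1/([l]·[N−s−l]) ) = q^s + q^{−s}. -/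
open Complex Finset

private lemma sum_refl (f : ℤ → ℂ) (a b t : ℤ) :
    ∑ l ∈ Finset.Ioc a b, f (t - l) = ∑ l ∈ Finset.Ioc (t - b - 1) (t - a - 1), f l := by
  refine Finset.sum_nbij' (fun l => t - l) (fun l => t - l) ?_ ?_ ?_ ?_ ?_ <;>
    intro x hx <;> simp only [Finset.mem_Ioc] at * <;> first | omega | rfl

private lemma sum_split (f : ℤ → ℂ) {a b c : ℤ} (h1 : a ≤ b) (h2 : b ≤ c) :
    (∑ l ∈ Finset.Ioc a b, f l) + ∑ l ∈ Finset.Ioc b c, f l = ∑ l ∈ Finset.Ioc a c, f l := by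
  rw [← Finset.Ioc_union_Ioc_eq_Ioc h1 h2, Finset.sum_union]
  exact Finset.disjoint_left.2 (by intro x hx hx'; simp only [Finset.mem_Ioc] at hx hx'; omega)

set_option maxHeartbeats 1000000 in
theorem stmt5 (N : ℕ) (hN : 2 ≤ N) (s : ℤ) (hs1 : 1 ≤ s) (hs : s ≤ (N : ℤ) - 1) :
    -(qint N s) ^ 2 *
      ((∑ l ∈ Finset.Icc 1 (s - 1), 1 / (qint N l * qint N (s - l))) -
        ∑ l ∈ Finset.Icc 1 ((N : ℤ) - s - 1), 1 / (qint N l * qint N ((N : ℤ) - s - l))) =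
      qq N ^ s + qq N ^ (-s) := by
  have hNZ : (N : ℤ) ≠ 0 := by omega
  have hNC : (N : ℂ) ≠ 0 := Nat.cast_ne_zero.2 (by omega)
  set q : ℂ := qq N with hqdef
  have hq0 : q ≠ 0 := Complex.exp_ne_zero _
  have hqN : q ^ (N : ℤ) = -1 := by
    rw [hqdef, qq, ← Complex.exp_int_mul]
    have h : ((N : ℤ) : ℂ) * (↑Real.pi * Complex.I / ↑N) = ↑Real.pi * Complex.I := by
      push_cast
      rw [mul_comm, div_mul_cancel₀ _ hNC]
    rw [h, Complex.exp_pi_mul_I]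
  -- abbreviations
  set B : ℤ → ℂ := fun k => q ^ k - q ^ (-k) with hBdef
  set g : ℤ → ℂ := fun k => (q ^ k + q ^ (-k)) / B k with hgdef
  -- B k ≠ 0 for 1 ≤ k ≤ N-1
  have hB : ∀ k : ℤ, 1 ≤ k → k ≤ (N : ℤ) - 1 → B k ≠ 0 := by
    intro k hk1 hk2 h
    have hqq : q ^ k = q ^ (-k) := by
      have := sub_eq_zero.mp h
      exact this
    have h2 : q ^ (2 * k) = 1 := by
      have e : q ^ (2 * k) = q ^ k * q ^ k := by
        rw [two_mul, zpow_add₀ hq0]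
      rw [e]
      nth_rewrite 2 [hqq]
      rw [← zpow_add₀ hq0, show k + -k = 0 by ring, zpow_zero]
    have hexp : Complex.exp (((2 * k : ℤ) : ℂ) * (↑Real.pi * Complex.I / ↑N)) = 1 := by
      rw [Complex.exp_int_mul]
      exact h2
    rw [Complex.exp_eq_one_iff] at hexp
    obtain ⟨n, hn⟩ := hexp
    have hπ : (Real.pi : ℂ) ≠ 0 := Complex.ofReal_ne_zero.2 Real.pi_ne_zero
    have hkC : (k : ℂ) = (n : ℂ) * (N : ℂ) := by
      have hI : Complex.I ≠ 0 := Complex.I_ne_zero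
      field_simp at hn
      have h2 : (k : ℂ) * (↑Real.pi * Complex.I) = ((n : ℂ) * N) * (↑Real.pi * Complex.I) := by
        push_cast at hn
        linear_combination (↑Real.pi * Complex.I) * hn / 2
      exact mul_right_cancel₀ (mul_ne_zero hπ hI) h2
    have hkZ : k = n * N := by exact_mod_cast hkC
    have hdvd : (N : ℤ) ∣ k := ⟨n, by linarith [hkZ]⟩
    have := Int.le_of_dvd (by omega) hdvd
    omega
  have hB1 : B 1 ≠ 0 := hB 1 le_rfl (by omega)
  have hBs : B s ≠ 0 := hB s hs1 hs
  -- q^(N - k) = -q^(-k) and q^(k - N) = -q^k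
  have hzsub : ∀ a b : ℤ, q ^ (a - b) = q ^ a * q ^ (-b) := by
    intro a b
    rw [sub_eq_add_neg, zpow_add₀ hq0]
  have hqNneg : q ^ (-(N : ℤ)) = -1 := by
    rw [zpow_neg, hqN]
    exact inv_neg_one
  have hqNk : ∀ k : ℤ, q ^ ((N : ℤ) - k) = -q ^ (-k) := by
    intro k
    rw [hzsub, hqN]
    ring
  have hqkN : ∀ k : ℤ, q ^ (k - (N : ℤ)) = -q ^ k := by
    intro k
    rw [show k - (N : ℤ) = k + -(N : ℤ) by ring, zpow_add₀ hq0, hqNneg]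
    ring
  -- B (N - k) = B k
  have hBN : ∀ k : ℤ, B ((N : ℤ) - k) = B k := by
    intro k
    show q ^ ((N:ℤ) - k) - q ^ (-((N:ℤ) - k)) = B k
    rw [hqNk, show -((N:ℤ) - k) = k - (N:ℤ) by ring, hqkN]
    show _ = q ^ k - q ^ (-k)
    ring
  -- g (N - k) = -g k
  have hgN : ∀ k : ℤ, g ((N : ℤ) - k) = -g k := by
    intro k
    show (q ^ ((N:ℤ) - k) + q ^ (-((N:ℤ) - k))) / B ((N:ℤ) - k) = -((q ^ k + q ^ (-k)) / B k)
    rw [hqNk, show -((N:ℤ) - k) = k - (N:ℤ) by ring, hqkN, hBN]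
    rw [show -q ^ (-k) + -q ^ k = -(q ^ k + q ^ (-k)) by ring, neg_div]
  -- generic identity: 1 / (B a * B b) = (g a + g b) / (2 * B (a + b))
  have hkey : ∀ a b : ℤ, B a ≠ 0 → B b ≠ 0 → B (a + b) ≠ 0 →
      1 / (B a * B b) = (g a + g b) / (2 * B (a + b)) := by
    intro a b ha hb hab
    show 1 / (B a * B b) =
      ((q ^ a + q ^ (-a)) / B a + (q ^ b + q ^ (-b)) / B b) / (2 * B (a + b))
    have ha' : q ^ a - q ^ (-a) ≠ 0 := ha
    have hb' : q ^ b - q ^ (-b) ≠ 0 := hb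
    have hBab : B (a + b) = q ^ a * q ^ b - q ^ (-a) * q ^ (-b) := by
      show q ^ (a + b) - q ^ (-(a + b)) = _
      rw [zpow_add₀ hq0, show -(a + b) = -a + -b by ring, zpow_add₀ hq0]
    have hab' : q ^ a * q ^ b - q ^ (-a) * q ^ (-b) ≠ 0 := hBab ▸ hab
    rw [hBab]
    show 1 / ((q ^ a - q ^ (-a)) * (q ^ b - q ^ (-b))) = _
    rw [div_eq_div_iff (mul_ne_zero ha' hb') (mul_ne_zero two_ne_zero hab')]
    have e1 : (q ^ a + q ^ (-a)) / (q ^ a - q ^ (-a)) * (q ^ a - q ^ (-a))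
        = q ^ a + q ^ (-a) := div_mul_cancel₀ _ ha'
    have e2 : (q ^ b + q ^ (-b)) / (q ^ b - q ^ (-b)) * (q ^ b - q ^ (-b))
        = q ^ b + q ^ (-b) := div_mul_cancel₀ _ hb'
    linear_combination (q ^ (-b) - q ^ b) * e1 + (q ^ (-a) - q ^ a) * e2
  -- qint in terms of B
  have hqint : ∀ k : ℤ, qint N k = B k / B 1 := by
    intro k
    show (q ^ k - q ^ (-k)) / (q - q⁻¹) = B k / B 1
    congr 1
    show _ = q ^ (1:ℤ) - q ^ (-1:ℤ)
    rw [zpow_one, zpow_neg_one]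
  -- the cotangent-like partial sum
  set C : ℤ → ℂ := fun m => ∑ l ∈ Finset.Ioc 0 m, g l with hCdef
  have hIcc : ∀ m : ℤ, Finset.Icc (1:ℤ) m = Finset.Ioc 0 m := by
    intro m; ext x; simp only [Finset.mem_Icc, Finset.mem_Ioc]; omega
  -- first sum
  have hsum : ∀ t : ℤ, 1 ≤ t → t ≤ (N:ℤ) - 1 →
      ∑ l ∈ Finset.Ioc 0 (t - 1), 1 / (qint N l * qint N (t - l))
        = B 1 ^ 2 / (2 * B t) * (2 * C (t - 1)) := by
    intro t ht1 ht2
    have hBt : B t ≠ 0 := hB t ht1 ht2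
    have step : ∀ l ∈ Finset.Ioc 0 (t - 1),
        1 / (qint N l * qint N (t - l)) = B 1 ^ 2 / (2 * B t) * (g l + g (t - l)) := by
      intro l hl
      rw [Finset.mem_Ioc] at hl
      have hBl : B l ≠ 0 := hB l (by omega) (by omega)
      have hBtl : B (t - l) ≠ 0 := hB (t - l) (by omega) (by omega)
      rw [hqint, hqint]
      rw [div_mul_div_comm, one_div_div]
      have : B l * B (t - l) ≠ 0 := mul_ne_zero hBl hBtl
      rw [show B 1 * B 1 = B 1 ^ 2 * 1 by ring, mul_div_assoc]
      rw [hkey l (t - l) hBl hBtl (by rw [show l + (t - l) = t by ring]; exact hBt)]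
      rw [show l + (t - l) = t by ring]
      ring
    rw [Finset.sum_congr rfl step, ← Finset.mul_sum, Finset.sum_add_distrib]
    congr 1
    have hrefl : ∑ l ∈ Finset.Ioc 0 (t - 1), g (t - l)
        = ∑ l ∈ Finset.Ioc (t - (t-1) - 1) (t - 0 - 1), g l := sum_refl g 0 (t - 1) t
    rw [hrefl, show t - (t - 1) - 1 = 0 by ring, show t - 0 - 1 = t - 1 by ring]
    show C (t-1) + C (t-1) = 2 * C (t-1)
    ring
  -- C (N - 1) = 0
  have hCN : C ((N:ℤ) - 1) = 0 := by
    have h1 : ∑ l ∈ Finset.Ioc 0 ((N:ℤ) - 1), g ((N:ℤ) - l)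
        = ∑ l ∈ Finset.Ioc ((N:ℤ) - ((N:ℤ)-1) - 1) ((N:ℤ) - 0 - 1), g l :=
      sum_refl g 0 ((N:ℤ) - 1) (N:ℤ)
    rw [show (N:ℤ) - ((N:ℤ) - 1) - 1 = 0 by ring, show (N:ℤ) - 0 - 1 = (N:ℤ) - 1 by ring] at h1
    have h2 : ∑ l ∈ Finset.Ioc 0 ((N:ℤ) - 1), g ((N:ℤ) - l)
        = -C ((N:ℤ) - 1) := by
      rw [show -C ((N:ℤ)-1) = ∑ l ∈ Finset.Ioc 0 ((N:ℤ)-1), -g l by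
        rw [← Finset.sum_neg_distrib]]
      exact Finset.sum_congr rfl fun l _ => hgN l
    have h3 : C ((N:ℤ) - 1) = -C ((N:ℤ) - 1) := h1.symm.trans h2
    linear_combination h3 / 2
  -- C (N - s - 1) = C s
  have hCNs : C ((N:ℤ) - s - 1) = C s := by
    have hsplit : (∑ l ∈ Finset.Ioc 0 ((N:ℤ) - s - 1), g l)
        + ∑ l ∈ Finset.Ioc ((N:ℤ) - s - 1) ((N:ℤ) - 1), g l
        = ∑ l ∈ Finset.Ioc 0 ((N:ℤ) - 1), g l :=
      sum_split g (by omega) (by omega)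
    have hrefl : ∑ l ∈ Finset.Ioc 0 s, g ((N:ℤ) - l)
        = ∑ l ∈ Finset.Ioc ((N:ℤ) - s - 1) ((N:ℤ) - 0 - 1), g l := sum_refl g 0 s (N:ℤ)
    rw [show (N:ℤ) - 0 - 1 = (N:ℤ) - 1 by ring] at hrefl
    have h2 : ∑ l ∈ Finset.Ioc 0 s, g ((N:ℤ) - l) = -C s := by
      rw [show -C s = ∑ l ∈ Finset.Ioc 0 s, -g l by rw [← Finset.sum_neg_distrib]]
      exact Finset.sum_congr rfl fun l _ => hgN l
    have h5 : (∑ l ∈ Finset.Ioc 0 ((N:ℤ) - s - 1), g l) + -C s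
        = ∑ l ∈ Finset.Ioc 0 ((N:ℤ) - 1), g l := by
      rw [← h2, hrefl]
      exact hsplit
    have h6 : C ((N:ℤ) - s - 1) + -C s = C ((N:ℤ) - 1) := h5
    rw [hCN] at h6
    linear_combination h6
  -- C s = C (s-1) + g s
  have hCs : C s = C (s - 1) + g s := by
    have hsplit : (∑ l ∈ Finset.Ioc 0 (s - 1), g l) + ∑ l ∈ Finset.Ioc (s - 1) s, g l
        = ∑ l ∈ Finset.Ioc 0 s, g l :=
      sum_split g (by omega) (by omega)
    have hsing : Finset.Ioc (s - 1) s = {s} := by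
      ext x; simp only [Finset.mem_Ioc, Finset.mem_singleton]; omega
    rw [hsing, Finset.sum_singleton] at hsplit
    exact hsplit.symm
  -- assemble
  rw [hIcc, hIcc, hsum s hs1 hs, hsum ((N:ℤ) - s) (by omega) (by omega)]
  rw [show (N:ℤ) - s - 1 = ((N:ℤ) - s) - 1 by ring] at hCNs ⊢
  rw [hBN s]
  rw [hCNs, hCs, hqint s]
  have hBgs : B s * g s = q ^ s + q ^ (-s) := by
    show B s * ((q ^ s + q ^ (-s)) / B s) = _
    field_simp
  rw [← hBgs]
  field_simp
  ring
end

section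
/- Let N ≥ 2 be an integer and t = exp(πi/(2N)). Then | ∑_{s=1}^{N−1} (−1)^s · (t^{2s} − t^{−2s})² · t^{s²} | = 2√(2N)·sin(π/N). In particular this alternating theta-type sum is nonzero. -/
open Complex Finset


private lemma shift1 (M : ℕ) (hM : 0 < M) (f : ℤ → ℂ)
    (hp : ∀ x : ℤ, f (x + M) = f x) :
    ∑ j ∈ range M, f ((j : ℤ) + 1) = ∑ j ∈ range M, f (j : ℤ) := by
  set g : ℕ → ℂ := fun j => f (j : ℤ) with hg
  have h1 : ∀ j : ℕ, f ((j:ℤ) + 1) = g (j+1) := by intro j; exact congrArg f (by push_cast; ring)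
  have e1 := Finset.sum_range_succ' g M
  have e2 := Finset.sum_range_succ g M
  have e3 : g M = g 0 := by simpa [hg] using hp 0
  calc ∑ j ∈ range M, f ((j:ℤ)+1) = ∑ j ∈ range M, g (j+1) := by simp [h1]
    _ = ∑ j ∈ range M, g j := by
        have : (∑ j ∈ range M, g (j+1)) + g 0 = (∑ j ∈ range M, g j) + g M := by
          rw [← e1, ← e2]
        rw [e3] at this
        exact add_right_cancel this

private lemma shiftk (M : ℕ) (f : ℤ → ℂ)
    (hp : ∀ x : ℤ, f (x + M) = f x) (k : ℕ) :
    ∑ j ∈ range M, f ((j : ℤ) + k) = ∑ j ∈ range M, f (j : ℤ) := by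
  induction k generalizing f with
  | zero => simp
  | succ k ih =>
    have step : ∑ j ∈ range M, f ((j:ℤ) + (k+1:ℕ)) = ∑ j ∈ range M, (fun x => f (x+1)) ((j:ℤ) + k) := by
      apply Finset.sum_congr rfl
      intro j _
      exact congrArg f (by push_cast; ring)
    rw [step, ih (fun x => f (x+1)) (fun x => by
      have := hp (x+1); simpa [add_comm, add_assoc, add_left_comm] using this)]
    rcases Nat.eq_zero_or_pos M with h0 | hM
    · simp [h0]
    · exact shift1 M hM f hp

private lemma tpow_congr (N : ℕ) (t : ℂ) (ht0 : t ≠ 0) (h4 : t ^ ((4:ℤ) * N) = 1)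
    (a b c : ℤ) (h : a = b + 4 * N * c) : t ^ a = t ^ b := by
  subst h
  rw [zpow_add₀ ht0]
  have : t ^ (4 * (N:ℤ) * c) = (t ^ ((4:ℤ) * N)) ^ c := by
    rw [← zpow_mul]
  rw [this, h4, one_zpow, mul_one]

private lemma Fper (N : ℕ) (t : ℂ) (ht0 : t ≠ 0) (h4 : t ^ ((4:ℤ) * N) = 1)
    (x : ℤ) : t ^ ((x + 2 * N) ^ 2) = t ^ (x ^ 2) := by
  exact tpow_congr N t ht0 h4 _ _ (x + N) (by ring)

private lemma Hexpand (N : ℕ) (t : ℂ) (ht0 : t ≠ 0) (h4 : t ^ ((4:ℤ) * N) = 1)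
    (h2 : t ^ ((2:ℤ) * N) = -1) (s : ℤ) :
    (-1:ℂ)^s * (t^(2*s) - t^(-(2*s)))^2 * t^(s^2)
    = t^(-(N:ℤ)^2-4) * t^((s+N+2)^2) + t^(-(N:ℤ)^2-4) * t^((s+N-2)^2)
      - 2*(t^(-(N:ℤ)^2) * t^((s+N)^2)) := by
  have comb : ∀ a b : ℤ, t ^ a * t ^ b = t ^ (a+b) := fun a b => (zpow_add₀ ht0 a b).symm
  have hm : (-1:ℂ)^s = t^(2*(N:ℤ)*s) := by
    rw [show (2*(N:ℤ)*s) = (2*(N:ℤ))*s by ring, zpow_mul, h2]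
  have p1 : (t^(2*s))^2 = t^(4*s) := by rw [sq, comb]; ring_nf
  have p2 : 2 * t^(2*s) * t^(-(2*s)) = 2 := by rw [mul_assoc, comb]; simp
  have p3 : (t^(-(2*s)))^2 = t^(-(4*s)) := by rw [sq, comb]; ring_nf
  have lhs_eq : (-1:ℂ)^s * (t^(2*s) - t^(-(2*s)))^2 * t^(s^2)
      = t^(s^2+2*N*s+4*s) - 2*t^(s^2+2*N*s) + t^(s^2+2*N*s-4*s) := by
    rw [hm, sub_sq, p1, p2, p3]
    calc t^(2*(N:ℤ)*s) * (t^(4*s) - 2 + t^(-(4*s))) * t^(s^2)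
        = t^(2*(N:ℤ)*s)*t^(4*s)*t^(s^2) - 2*(t^(2*(N:ℤ)*s)*t^(s^2))
          + t^(2*(N:ℤ)*s)*t^(-(4*s))*t^(s^2) := by ring
      _ = _ := by simp only [comb]; ring_nf
  rw [lhs_eq]
  have q1 : t^(-(N:ℤ)^2-4) * t^((s+N+2)^2) = t^(s^2+2*N*s+4*s) := by
    rw [comb]; exact tpow_congr N t ht0 h4 _ _ 1 (by ring)
  have q2 : t^(-(N:ℤ)^2-4) * t^((s+N-2)^2) = t^(s^2+2*N*s-4*s) := by
    rw [comb]; exact tpow_congr N t ht0 h4 _ _ (-1) (by ring)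
  have q3 : t^(-(N:ℤ)^2) * t^((s+N)^2) = t^(s^2+2*N*s) := by
    rw [comb]; exact tpow_congr N t ht0 h4 _ _ 0 (by ring)
  rw [q1, q2, q3]; ring

private lemma sum_eq (N : ℕ) (hN : 2 ≤ N) (t : ℂ) (ht0 : t ≠ 0)
    (h4 : t ^ ((4:ℤ) * N) = 1) (h2 : t ^ ((2:ℤ) * N) = -1) :
    (∑ s ∈ Icc 1 (N-1), (-1:ℂ)^s * (t ^ (2*(s:ℤ)) - t ^ (-(2*(s:ℤ))))^2 * t^(s^2))
    = t ^ (-(N:ℤ)^2) * (t ^ (-4:ℤ) - 1) * ∑ j ∈ range (2*N), t ^ ((j:ℤ)^2) := by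
  have comb : ∀ a b : ℤ, t ^ a * t ^ b = t ^ (a+b) := fun a b => (zpow_add₀ ht0 a b).symm
  set H : ℤ → ℂ := fun m => (-1:ℂ)^m * (t^(2*m) - t^(-(2*m)))^2 * t^(m^2) with hH
  -- step (i): statement sum equals sum of H
  have hi : (∑ s ∈ Icc 1 (N-1), (-1:ℂ)^s * (t ^ (2*(s:ℤ)) - t ^ (-(2*(s:ℤ))))^2 * t^(s^2))
      = ∑ s ∈ Icc 1 (N-1), H (s:ℤ) := by
    apply Finset.sum_congr rfl
    intro s _
    simp only [hH]
    rw [show ((s:ℤ)^2) = ((s^2 : ℕ) : ℤ) by push_cast; ring, zpow_natCast, zpow_natCast]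
  -- H vanishes at 0 and N
  have hH0 : H 0 = 0 := by simp [hH]
  have hHN : H (N:ℤ) = 0 := by
    have e : t^(2*(N:ℤ)) - t^(-(2*(N:ℤ))) = 0 := by
      rw [zpow_neg, h2]; norm_num
    simp only [hH]; rw [e]; ring
  -- reflection
  have hrefl : ∀ s : ℤ, H (2*N - s) = H s := by
    intro s
    have hsq : (-1:ℂ)^s * (-1:ℂ)^s = 1 := by
      rw [show ((-1:ℂ)^s * (-1:ℂ)^s) = ((-1:ℂ)*(-1))^s by rw [mul_zpow]]
      norm_num
    have hm : (-1:ℂ)^(2*(N:ℤ)-s) = (-1:ℂ)^s := by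
      rw [zpow_sub₀ (by norm_num : (-1:ℂ) ≠ 0)]
      have h2N : (-1:ℂ)^(2*(N:ℤ)) = 1 := by
        rw [show (2*(N:ℤ)) = (2:ℤ)*(N:ℤ) by ring, zpow_mul]
        norm_num
      rw [h2N, one_div]
      exact (eq_inv_of_mul_eq_one_left hsq).symm
    have ha : t^(2*(2*(N:ℤ)-s)) = t^(-(2*s)) := tpow_congr N t ht0 h4 _ _ 1 (by ring)
    have hb : t^(-(2*(2*(N:ℤ)-s))) = t^(2*s) := tpow_congr N t ht0 h4 _ _ (-1) (by ring)
    have hc : t^((2*(N:ℤ)-s)^2) = t^(s^2) := tpow_congr N t ht0 h4 _ _ (N - s) (by ring)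
    simp only [hH, hm, ha, hb, hc]
    ring
  -- step (ii): doubling
  have hii : ∑ s ∈ range (2*N), H (s:ℤ) = 2 * ∑ s ∈ Icc 1 (N-1), H (s:ℤ) := by
    have hsplit : ∑ s ∈ range (2*N), H (s:ℤ)
        = (∑ s ∈ Ico 0 (N+1), H (s:ℤ)) + ∑ s ∈ Ico (N+1) (2*N), H (s:ℤ) := by
      rw [range_eq_Ico, ← Finset.sum_Ico_consecutive _ (Nat.zero_le _) (by omega : N+1 ≤ 2*N)]
    have h1 : ∑ s ∈ Ico 0 (N+1), H (s:ℤ) = ∑ s ∈ Ico 1 N, H (s:ℤ) := by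
      rw [Finset.sum_Ico_succ_top (Nat.zero_le N),
        Finset.sum_eq_sum_Ico_succ_bot (by omega : 0 < N)]
      simp only [Nat.cast_zero, hH0, hHN, Nat.cast_ofNat]
      simp [hHN]
    have h2' : ∑ s ∈ Ico (N+1) (2*N), H (s:ℤ) = ∑ s ∈ Ico 1 N, H (s:ℤ) := by
      apply Finset.sum_nbij' (i := fun s => 2*N - s) (j := fun s => 2*N - s)
      · intro a ha; simp only [Finset.mem_Ico] at *; omega
      · intro a ha; simp only [Finset.mem_Ico] at *; omega
      · intro a ha; simp only [Finset.mem_Ico] at ha; omega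
      · intro a ha; simp only [Finset.mem_Ico] at ha; omega
      · intro a ha
        simp only [Finset.mem_Ico] at ha
        rw [show ((2*N - a : ℕ) : ℤ) = 2*(N:ℤ) - a by omega, hrefl]
    have hIcc : Ico 1 N = Icc 1 (N-1) := by
      rw [show N = (N-1)+1 by omega, Finset.Ico_add_one_right_eq_Icc]
      congr 1 <;> omega
    rw [hsplit, h1, h2', hIcc]; ring
  -- step (iii): full-period sum via Hexpand and shifts
  have hperiod : ∀ x : ℤ, t^((x + ((2*N : ℕ) : ℤ))^2) = t^(x^2) := by
    intro x
    rw [show ((2*N:ℕ):ℤ) = 2*(N:ℤ) by push_cast; ring]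
    exact Fper N t ht0 h4 x
  have hshift : ∀ k : ℕ, ∑ j ∈ range (2*N), t^(((j:ℤ) + k)^2) = ∑ j ∈ range (2*N), t^((j:ℤ)^2) :=
    shiftk (2*N) (fun x => t^(x^2)) hperiod
  have hiii : ∑ s ∈ range (2*N), H (s:ℤ)
      = (t^(-(N:ℤ)^2-4) + t^(-(N:ℤ)^2-4) - 2*t^(-(N:ℤ)^2)) * ∑ j ∈ range (2*N), t ^ ((j:ℤ)^2) := by
    have e1 : ∑ s ∈ range (2*N), H (s:ℤ)
        = ∑ s ∈ range (2*N), (t^(-(N:ℤ)^2-4) * t^(((s:ℤ)+N+2)^2)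
          + t^(-(N:ℤ)^2-4) * t^(((s:ℤ)+N-2)^2) - 2*(t^(-(N:ℤ)^2) * t^(((s:ℤ)+N)^2))) := by
      apply Finset.sum_congr rfl
      intro s _
      exact Hexpand N t ht0 h4 h2 (s:ℤ)
    rw [e1]
    rw [Finset.sum_sub_distrib, Finset.sum_add_distrib]
    simp only [← Finset.mul_sum, ← mul_assoc]
    have s1 : ∑ s ∈ range (2*N), t^(((s:ℤ)+N+2)^2) = ∑ j ∈ range (2*N), t ^ ((j:ℤ)^2) := by
      rw [← hshift (N+2)]
      apply Finset.sum_congr rfl; intro s _; congr 1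
      all_goals rw [show ((N+2 : ℕ):ℤ) = (N:ℤ)+2 by omega]
      all_goals ring
    have s2 : ∑ s ∈ range (2*N), t^(((s:ℤ)+N-2)^2) = ∑ j ∈ range (2*N), t ^ ((j:ℤ)^2) := by
      rw [← hshift (N-2)]
      apply Finset.sum_congr rfl; intro s _; congr 1
      all_goals rw [show ((N-2 : ℕ):ℤ) = (N:ℤ)-2 by omega]
      all_goals ring
    have s3 : ∑ s ∈ range (2*N), t^(((s:ℤ)+N)^2) = ∑ j ∈ range (2*N), t ^ ((j:ℤ)^2) := by
      rw [← hshift N]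
    rw [s1, s2, s3]; ring
  -- combine
  have key : 2 * ∑ s ∈ Icc 1 (N-1), H (s:ℤ)
      = (t^(-(N:ℤ)^2-4) + t^(-(N:ℤ)^2-4) - 2*t^(-(N:ℤ)^2)) * ∑ j ∈ range (2*N), t ^ ((j:ℤ)^2) := by
    rw [← hii, hiii]
  have c4 : t^(-(N:ℤ)^2-4) = t^(-(N:ℤ)^2) * t^(-4:ℤ) := by rw [comb]; ring_nf
  rw [hi]
  have : (2:ℂ) ≠ 0 := by norm_num
  apply mul_left_cancel₀ this
  rw [key, c4]; ring

private lemma gauss_norm (N : ℕ) (hN : 1 ≤ N) (t : ℂ) (ht0 : t ≠ 0)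
    (h4 : t ^ ((4:ℤ)*N) = 1)
    (hconj : (starRingEnd ℂ) t = t⁻¹)
    (hprim : ∀ j : ℕ, 0 < j → j < 2*N → t ^ (2*(j:ℤ)) ≠ 1) :
    (∑ j ∈ range (2*N), t ^ ((j:ℤ)^2)) * (starRingEnd ℂ) (∑ j ∈ range (2*N), t ^ ((j:ℤ)^2))
      = ((2*N : ℕ) : ℂ) := by
  have comb : ∀ a b : ℤ, t ^ a * t ^ b = t ^ (a+b) := fun a b => (zpow_add₀ ht0 a b).symm
  have hperiod : ∀ x : ℤ, t^((x + ((2*N : ℕ) : ℤ))^2) = t^(x^2) := by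
    intro x
    rw [show ((2*N:ℕ):ℤ) = 2*(N:ℤ) by push_cast; ring]
    exact Fper N t ht0 h4 x
  have hshift : ∀ k : ℕ, ∑ j ∈ range (2*N), t^(((j:ℤ) + k)^2) = ∑ j ∈ range (2*N), t^((j:ℤ)^2) :=
    shiftk (2*N) (fun x => t^(x^2)) hperiod
  have hconj' : ∀ k : ℤ, (starRingEnd ℂ) (t ^ k) = t ^ (-k) := by
    intro k; rw [map_zpow₀, hconj, inv_zpow, ← zpow_neg]
  have e0 : (starRingEnd ℂ) (∑ j ∈ range (2*N), t ^ ((j:ℤ)^2))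
      = ∑ k ∈ range (2*N), t ^ (-((k:ℤ)^2)) := by
    rw [map_sum]
    exact Finset.sum_congr rfl fun k _ => hconj' _
  rw [e0, Finset.mul_sum]
  have inner : ∀ k : ℕ, (∑ j ∈ range (2*N), t^((j:ℤ)^2)) * t^(-((k:ℤ)^2))
      = ∑ j ∈ range (2*N), t^((j:ℤ)^2) * (t^(2*(j:ℤ)))^k := by
    intro k
    rw [← hshift k, Finset.sum_mul]
    apply Finset.sum_congr rfl
    intro j _
    rw [show (t^(2*(j:ℤ)))^k = t^(2*(j:ℤ)*k) by rw [← zpow_natCast (t^(2*(j:ℤ))), ← zpow_mul]]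
    rw [comb, comb]
    congr 1
    ring
  rw [Finset.sum_congr rfl (fun k _ => inner k), Finset.sum_comm]
  have geo : ∀ j ∈ range (2*N), (∑ k ∈ range (2*N), t^((j:ℤ)^2) * (t^(2*(j:ℤ)))^k)
      = if j = 0 then ((2*N:ℕ) : ℂ) else 0 := by
    intro j hj
    rw [← Finset.mul_sum]
    by_cases hj0 : j = 0
    · subst hj0
      simp
    · rw [if_neg hj0, geom_sum_eq (hprim j (Nat.pos_of_ne_zero hj0) (mem_range.mp hj))]
      have hu : (t^(2*(j:ℤ)))^(2*N) = 1 := by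
        rw [← zpow_natCast (t^(2*(j:ℤ))), ← zpow_mul,
          show (2*(j:ℤ)*((2*N:ℕ):ℤ)) = (4*(N:ℤ))*j by push_cast; ring, zpow_mul, h4, one_zpow]
      rw [hu]
      simp
  rw [Finset.sum_congr rfl geo, Finset.sum_ite_eq' (range (2*N)) 0 (fun _ => ((2*N:ℕ):ℂ))]
  rw [if_pos (Finset.mem_range.mpr (by omega : 0 < 2*N))]


theorem stmt10 (N : ℕ) (hN : 2 ≤ N) (t : ℂ)
    (ht : t = Complex.exp (Real.pi * Complex.I / (2 * N))) :
    ‖(∑ s ∈ Finset.Icc 1 (N - 1),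
        (-1 : ℂ) ^ s * (t ^ (2 * (s : ℤ)) - t ^ (-(2 * (s : ℤ)))) ^ 2 * t ^ (s ^ 2))‖ =
      2 * Real.sqrt (2 * N) * Real.sin (Real.pi / N) ∧
    (∑ s ∈ Finset.Icc 1 (N - 1),
        (-1 : ℂ) ^ s * (t ^ (2 * (s : ℤ)) - t ^ (-(2 * (s : ℤ)))) ^ 2 * t ^ (s ^ 2)) ≠ 0 := by
  have hNR0 : (N:ℝ) ≠ 0 := Nat.cast_ne_zero.mpr (by omega)
  have hNRpos : (0:ℝ) < N := by positivity
  have hN0 : (N:ℂ) ≠ 0 := Nat.cast_ne_zero.mpr (by omega)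
  have ht0 : t ≠ 0 := by rw [ht]; exact Complex.exp_ne_zero _
  have hzpow : ∀ k : ℤ, t ^ k = Complex.exp (k * (↑Real.pi * Complex.I / (2 * N))) := by
    intro k; rw [ht, ← Complex.exp_int_mul]
  have h4 : t ^ ((4:ℤ)*(N:ℤ)) = 1 := by
    rw [hzpow]
    rw [show (((4:ℤ)*(N:ℤ) : ℤ) : ℂ) * (↑Real.pi * Complex.I / (2 * N))
      = 2 * Real.pi * Complex.I by push_cast; field_simp; ring]
    exact Complex.exp_two_pi_mul_I
  have h2 : t ^ ((2:ℤ)*(N:ℤ)) = -1 := by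
    rw [hzpow]
    rw [show (((2:ℤ)*(N:ℤ) : ℤ) : ℂ) * (↑Real.pi * Complex.I / (2 * N))
      = Real.pi * Complex.I by push_cast; field_simp]
    exact Complex.exp_pi_mul_I
  have hconj : (starRingEnd ℂ) t = t⁻¹ := by
    rw [ht, ← Complex.exp_conj, ← Complex.exp_neg]
    congr 1
    simp only [map_div₀, map_mul, Complex.conj_I, Complex.conj_ofReal, map_ofNat,
      Complex.conj_natCast]
    ring
  have hprim : ∀ j : ℕ, 0 < j → j < 2*N → t ^ (2*(j:ℤ)) ≠ 1 := by
    intro j hj1 hj2 hcon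
    rw [hzpow] at hcon
    obtain ⟨n, hn⟩ := Complex.exp_eq_one_iff.mp hcon
    have hπI : (↑Real.pi * Complex.I) ≠ 0 :=
      mul_ne_zero (Complex.ofReal_ne_zero.mpr Real.pi_ne_zero) Complex.I_ne_zero
    have hj : ((j:ℤ):ℂ) = ((2*n*N : ℤ):ℂ) := by
      have h1 : ((2*(j:ℤ) : ℤ):ℂ) * (↑Real.pi * Complex.I) = (n*(2*N)) * (2 * ↑Real.pi * Complex.I) := by
        field_simp at hn
        push_cast at hn ⊢
        linear_combination (↑Real.pi * Complex.I) * hn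
      push_cast at h1 ⊢
      have := mul_right_cancel₀ hπI (by linear_combination h1/2 :
        ((j:ℂ)) * (↑Real.pi * Complex.I) = (2*n*N) * (↑Real.pi * Complex.I))
      exact this
    have hjz : (j:ℤ) = 2*n*N := by exact_mod_cast hj
    have hNz : (0:ℤ) < (N:ℤ) := by exact_mod_cast hNRpos
    have hjpos : (0:ℤ) < (j:ℤ) := by exact_mod_cast hj1
    have hjlt : (j:ℤ) < 2*(N:ℤ) := by exact_mod_cast hj2
    have hn_pos : 0 < n := by by_contra hc; push_neg at hc; nlinarith
    nlinarith
  -- the two key identities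
  have hkey := sum_eq N hN t ht0 h4 h2
  have hG := gauss_norm N (by omega) t ht0 h4 hconj hprim
  set G := ∑ j ∈ range (2*N), t ^ ((j:ℤ)^2) with hGdef
  have hnormSq : Complex.normSq G = 2*N := by
    rw [Complex.mul_conj] at hG
    exact_mod_cast hG
  have habsG : ‖G‖ = Real.sqrt (2*N) := by
    rw [Complex.norm_def, hnormSq]
  have habst : ‖t‖ = 1 := by
    rw [ht, show (↑Real.pi * Complex.I/(2*(N:ℂ))) = ↑(Real.pi/(2*N)) * Complex.I by
      push_cast; ring]
    exact Complex.norm_exp_ofReal_mul_I _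
  have habstz : ‖t ^ (-(N:ℤ)^2)‖ = 1 := by
    rw [norm_zpow, habst, one_zpow]
  -- |t^{-4} - 1| = 2 sin(π/N)
  have hsinpos : 0 < Real.sin (Real.pi/N) := by
    apply Real.sin_pos_of_pos_of_lt_pi
    · positivity
    · rw [div_lt_iff₀ hNRpos]
      have h2le : (2:ℝ) ≤ N := by exact_mod_cast hN
      nlinarith [Real.pi_pos, h2le]
  have habs4 : ‖t ^ (-4:ℤ) - 1‖ = 2 * Real.sin (Real.pi/N) := by
    have ht4 : t^(-4:ℤ) = Complex.exp (↑(-(2*Real.pi/N)) * Complex.I) := by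
      rw [hzpow]; congr 1; push_cast; field_simp; ring
    have hsplit : t^(-4:ℤ) - 1
        = ↑(Real.cos (-(2*Real.pi/N)) - 1) + ↑(Real.sin (-(2*Real.pi/N))) * Complex.I := by
      rw [ht4, Complex.exp_mul_I, ← Complex.ofReal_cos, ← Complex.ofReal_sin]
      push_cast
      ring
    rw [hsplit, Complex.norm_def, Complex.normSq_add_mul_I]
    have hcos : Real.cos (2*(Real.pi/N)) = 1 - 2 * Real.sin (Real.pi/N)^2 := by
      rw [Real.cos_two_mul']
      nlinarith [Real.sin_sq_add_cos_sq (Real.pi/N)]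
    have harg : (Real.cos (-(2*Real.pi/N)) - 1)^2 + Real.sin (-(2*Real.pi/N))^2
        = (2 * Real.sin (Real.pi/N))^2 := by
      rw [Real.cos_neg, Real.sin_neg]
      have h2x : 2*Real.pi/N = 2*(Real.pi/N) := by ring
      rw [h2x, hcos]
      nlinarith [Real.sin_sq_add_cos_sq (2*(Real.pi/N))]
    rw [harg, Real.sqrt_sq (by positivity)]
  -- assemble
  have habsS : ‖(∑ s ∈ Finset.Icc 1 (N - 1),
      (-1 : ℂ) ^ s * (t ^ (2 * (s : ℤ)) - t ^ (-(2 * (s : ℤ)))) ^ 2 * t ^ (s ^ 2))‖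
      = 2 * Real.sqrt (2 * N) * Real.sin (Real.pi / N) := by
    rw [hkey, norm_mul, norm_mul, habstz, habs4, habsG]
    ring
  refine ⟨habsS, ?_⟩
  intro h0
  rw [h0] at habsS
  simp only [norm_zero] at habsS
  have : 0 < 2 * Real.sqrt (2 * N) * Real.sin (Real.pi / N) := by
    have : 0 < Real.sqrt (2*N) := Real.sqrt_pos.mpr (by positivity)
    positivity
  linarith [habsS, this]
end

section
/- Let N ≥ 3 be an odd integer and t = exp(πi/(2N)). Then | ∑_{s=0}^{(N−3)/2} (t^{2(2s+1)} − t^{−2(2s+1)})² · t^{(2s+1)²} | = 2√N·sin(π/N). In particular this sum is nonzero. -/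
open Complex Finset

private lemma sum_shift_one (h : ℕ → ℂ) (N : ℕ) (hper : ∀ s, h (s + N) = h s) :
    ∑ s ∈ Finset.range N, h (s + 1) = ∑ s ∈ Finset.range N, h s := by
  have h1 := Finset.sum_range_succ' h N
  have h2 := Finset.sum_range_succ h N
  have h3 : h N = h 0 := by simpa using hper 0
  rw [h2, h3] at h1
  exact (add_right_cancel h1).symm

private lemma sum_shift (h : ℕ → ℂ) (N : ℕ) (hper : ∀ s, h (s + N) = h s) (r : ℕ) :
    ∑ s ∈ Finset.range N, h (s + r) = ∑ s ∈ Finset.range N, h s := by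
  induction r with
  | zero => simp
  | succ r ih =>
    have step := sum_shift_one (fun s => h (s + r)) N (fun s => by
      show h (s + N + r) = h (s + r)
      rw [show s + N + r = (s + r) + N by omega]
      exact hper (s + r))
    calc ∑ s ∈ Finset.range N, h (s + (r + 1))
        = ∑ s ∈ Finset.range N, h ((s + 1) + r) := by
          refine Finset.sum_congr rfl fun s _ => ?_
          rw [show s + (r + 1) = s + 1 + r by omega]
      _ = ∑ s ∈ Finset.range N, h (s + r) := step
      _ = ∑ s ∈ Finset.range N, h s := ih

private lemma sum_range_add' (h : ℕ → ℂ) (a b : ℕ) :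
    ∑ s ∈ Finset.range (a + b), h s
      = ∑ s ∈ Finset.range a, h s + ∑ s ∈ Finset.range b, h (a + s) := by
  induction b with
  | zero => simp
  | succ b ih =>
    rw [show a + (b + 1) = (a + b) + 1 by omega, Finset.sum_range_succ, ih,
      Finset.sum_range_succ, add_assoc]

theorem stmt11 (N : ℕ) (hN : 3 ≤ N) (hodd : Odd N) (t : ℂ)
    (ht : t = Complex.exp (Real.pi * Complex.I / (2 * N))) :
    ‖(∑ s ∈ Finset.range ((N - 3) / 2 + 1),
        (t ^ (2 * (2 * (s : ℤ) + 1)) - t ^ (-(2 * (2 * (s : ℤ) + 1)))) ^ 2 *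
          t ^ ((2 * s + 1) ^ 2))‖ =
      2 * Real.sqrt N * Real.sin (Real.pi / N) ∧
    (∑ s ∈ Finset.range ((N - 3) / 2 + 1),
        (t ^ (2 * (2 * (s : ℤ) + 1)) - t ^ (-(2 * (2 * (s : ℤ) + 1)))) ^ 2 *
          t ^ ((2 * s + 1) ^ 2)) ≠ 0 := by
  obtain ⟨M, hM⟩ := hodd
  set K := (N - 3) / 2 + 1 with hKdef
  have hK : N = 2 * K + 1 := by omega
  have hK1 : 1 ≤ K := by omega
  have hNne : (N : ℂ) ≠ 0 := Nat.cast_ne_zero.2 (by omega)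
  have ht0 : t ≠ 0 := by rw [ht]; exact Complex.exp_ne_zero _
  have hprim : IsPrimitiveRoot t (4 * N) := by
    have h4N : (4 * N : ℕ) ≠ 0 := by omega
    have h := Complex.isPrimitiveRoot_exp (4 * N) h4N
    have he : Complex.exp (2 * Real.pi * Complex.I / ((4 * N : ℕ) : ℂ)) = t := by
      rw [ht]
      congr 1
      push_cast
      field_simp
      ring
    rwa [he] at h
  have hone : ∀ k : ℤ, t ^ k = 1 ↔ (4 * (N : ℤ)) ∣ k := by
    intro k
    have := hprim.zpow_eq_one_iff_dvd k
    rwa [show ((4 * N : ℕ) : ℤ) = 4 * (N : ℤ) by push_cast; ring] at this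
  have hmul : ∀ x y : ℤ, t ^ (x + y) = t ^ x * t ^ y := fun x y => zpow_add₀ ht0 x y
  have heq : ∀ x y : ℤ, 4 * (N : ℤ) ∣ x - y → t ^ x = t ^ y := by
    intro x y hxy
    have h1 : t ^ (x - y) = 1 := (hone _).2 hxy
    calc t ^ x = t ^ (x - y) * t ^ y := by rw [← hmul]; congr 1; ring
      _ = t ^ y := by rw [h1, one_mul]
  -- summand identity
  have hterm : ∀ s : ℕ,
      (t ^ (2 * (2 * (s : ℤ) + 1)) - t ^ (-(2 * (2 * (s : ℤ) + 1)))) ^ 2 * t ^ ((2 * s + 1) ^ 2)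
      = t ^ (-4 : ℤ) * t ^ ((2 * (s : ℤ) + 3) ^ 2) + t ^ (-4 : ℤ) * t ^ ((2 * (s : ℤ) - 1) ^ 2)
        - 2 * t ^ ((2 * (s : ℤ) + 1) ^ 2) := by
    intro s
    have hc : t ^ ((2 * s + 1) ^ 2) = t ^ (((2 * (s : ℤ) + 1) ^ 2)) := by
      rw [← zpow_natCast]
      congr 1
    have h1 : t ^ (2 * (2 * (s : ℤ) + 1)) * t ^ (2 * (2 * (s : ℤ) + 1)) * t ^ ((2 * (s : ℤ) + 1) ^ 2)
        = t ^ (-4 : ℤ) * t ^ ((2 * (s : ℤ) + 3) ^ 2) := by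
      simp only [← hmul]
      exact heq _ _ ⟨0, by ring⟩
    have h2 : t ^ (-(2 * (2 * (s : ℤ) + 1))) * t ^ (-(2 * (2 * (s : ℤ) + 1))) * t ^ ((2 * (s : ℤ) + 1) ^ 2)
        = t ^ (-4 : ℤ) * t ^ ((2 * (s : ℤ) - 1) ^ 2) := by
      simp only [← hmul]
      exact heq _ _ ⟨0, by ring⟩
    have h3 : t ^ (2 * (2 * (s : ℤ) + 1)) * t ^ (-(2 * (2 * (s : ℤ) + 1))) = 1 := by
      rw [← hmul]
      simpa using (hone 0).2 ⟨0, by ring⟩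
    rw [hc]
    linear_combination h1 + h2 - 2 * t ^ ((2 * (s : ℤ) + 1) ^ 2) * h3
  -- sum rewriting
  set T := ∑ s ∈ Finset.range K, t ^ ((2 * (s : ℤ) + 1) ^ 2) with hTdef
  set G1 := ∑ s ∈ Finset.range N, t ^ ((2 * (s : ℤ) + 1) ^ 2) with hG1def
  have hNK : (N : ℤ) = 2 * (K : ℤ) + 1 := by omega
  have hS1 : (∑ s ∈ Finset.range K,
      (t ^ (2 * (2 * (s : ℤ) + 1)) - t ^ (-(2 * (2 * (s : ℤ) + 1)))) ^ 2 * t ^ ((2 * s + 1) ^ 2))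
      = t ^ (-4 : ℤ) * (∑ s ∈ Finset.range K, t ^ ((2 * (s : ℤ) + 3) ^ 2))
        + t ^ (-4 : ℤ) * (∑ s ∈ Finset.range K, t ^ ((2 * (s : ℤ) - 1) ^ 2))
        - 2 * T := by
    rw [Finset.sum_congr rfl fun s _ => hterm s]
    rw [Finset.sum_sub_distrib, Finset.sum_add_distrib, ← Finset.mul_sum, ← Finset.mul_sum,
      ← Finset.mul_sum, hTdef]
  have hA : (∑ s ∈ Finset.range K, t ^ ((2 * (s : ℤ) + 3) ^ 2))
      = T + t ^ ((N : ℤ) ^ 2) - t ^ (1 : ℤ) := by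
    have e1 : (∑ s ∈ Finset.range K, t ^ ((2 * (s : ℤ) + 3) ^ 2))
        = ∑ s ∈ Finset.range K, (fun u : ℕ => t ^ ((2 * (u : ℤ) + 1) ^ 2)) (s + 1) := by
      refine Finset.sum_congr rfl fun s _ => ?_
      show t ^ ((2 * (s : ℤ) + 3) ^ 2) = t ^ ((2 * (((s + 1 : ℕ) : ℤ)) + 1) ^ 2)
      exact heq _ _ ⟨0, by push_cast; ring⟩
    have e2 := Finset.sum_range_succ' (fun u : ℕ => t ^ ((2 * (u : ℤ) + 1) ^ 2)) K
    have e3 := Finset.sum_range_succ (fun u : ℕ => t ^ ((2 * (u : ℤ) + 1) ^ 2)) K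
    have e4 : t ^ ((2 * (K : ℤ) + 1) ^ 2) = t ^ ((N : ℤ) ^ 2) := by rw [hNK]
    have e5 : t ^ ((2 * ((0 : ℕ) : ℤ) + 1) ^ 2) = t ^ (1 : ℤ) := by norm_num
    rw [e1]
    beta_reduce at e2 e3
    linear_combination -e2 + e3 + e4 - e5 - hTdef
  have hB : (∑ s ∈ Finset.range K, t ^ ((2 * (s : ℤ) - 1) ^ 2))
      = T - t ^ ((N : ℤ) ^ 2 + 4) + t ^ (1 : ℤ) := by
    have hKK : K = (K - 1) + 1 := by omega
    have e2 := Finset.sum_range_succ' (fun u : ℕ => t ^ ((2 * (u : ℤ) - 1) ^ 2)) (K - 1)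
    have e3 := Finset.sum_range_succ (fun u : ℕ => t ^ ((2 * (u : ℤ) + 1) ^ 2)) (K - 1)
    have e1 : (∑ s ∈ Finset.range (K - 1), t ^ ((2 * (((s + 1 : ℕ)) : ℤ) - 1) ^ 2))
        = ∑ s ∈ Finset.range (K - 1), t ^ ((2 * (s : ℤ) + 1) ^ 2) := by
      refine Finset.sum_congr rfl fun s _ => ?_
      exact heq _ _ ⟨0, by push_cast; ring⟩
    have e4 : t ^ ((2 * (((K - 1 : ℕ)) : ℤ) + 1) ^ 2) = t ^ ((N : ℤ) ^ 2 + 4) := by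
      have hc : (((K - 1 : ℕ)) : ℤ) = (K : ℤ) - 1 := by omega
      rw [hc]
      refine heq _ _ ⟨-1, by rw [hNK]; ring⟩
    have e5 : t ^ ((2 * ((0 : ℕ) : ℤ) - 1) ^ 2) = t ^ (1 : ℤ) := by norm_num
    beta_reduce at e2 e3
    rw [hTdef, hKK]
    rw [e1] at e2
    linear_combination e2 - e3 - e4 + e5
  have hG1 : G1 = 2 * T + t ^ ((N : ℤ) ^ 2) := by
    have hsplit := sum_range_add' (fun u : ℕ => t ^ ((2 * (u : ℤ) + 1) ^ 2)) (K + 1) K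
    rw [show (K + 1) + K = N by omega] at hsplit
    beta_reduce at hsplit
    have r1 : (∑ s ∈ Finset.range (K + 1), t ^ ((2 * (s : ℤ) + 1) ^ 2))
        = T + t ^ ((N : ℤ) ^ 2) := by
      rw [Finset.sum_range_succ, hTdef]
      congr 1
      exact heq _ _ ⟨0, by rw [hNK]; ring⟩
    have r2 : (∑ s ∈ Finset.range K, t ^ ((2 * (((K + 1 + s : ℕ)) : ℤ) + 1) ^ 2)) = T := by
      have r3 : (∑ s ∈ Finset.range K, t ^ ((2 * (((K + 1 + s : ℕ)) : ℤ) + 1) ^ 2))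
          = ∑ s ∈ Finset.range K, (fun u : ℕ => t ^ ((2 * (u : ℤ) + 1) ^ 2)) (K - 1 - s) := by
        refine Finset.sum_congr rfl fun s hs => ?_
        have hsK : s < K := Finset.mem_range.1 hs
        show t ^ ((2 * (((K + 1 + s : ℕ)) : ℤ) + 1) ^ 2)
            = t ^ ((2 * (((K - 1 - s : ℕ)) : ℤ) + 1) ^ 2)
        have hc : (((K - 1 - s : ℕ)) : ℤ) = (K : ℤ) - 1 - (s : ℤ) := by omega
        rw [hc]
        refine heq _ _ ⟨2 * (s : ℤ) + 2, ?_⟩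
        have hc2 : (((K + 1 + s : ℕ)) : ℤ) = (K : ℤ) + 1 + (s : ℤ) := by push_cast; ring
        rw [hc2, show (N : ℤ) = 2 * (K : ℤ) + 1 from hNK]
        ring
      rw [r3]
      have r4 := Finset.sum_range_reflect (fun u : ℕ => t ^ ((2 * (u : ℤ) + 1) ^ 2)) K
      beta_reduce at r4 ⊢
      rw [r4, hTdef]
    rw [hG1def, hsplit, r1, r2]
    ring
  have hS : (∑ s ∈ Finset.range K,
      (t ^ (2 * (2 * (s : ℤ) + 1)) - t ^ (-(2 * (2 * (s : ℤ) + 1)))) ^ 2 * t ^ ((2 * s + 1) ^ 2))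
      = (t ^ (-4 : ℤ) - 1) * G1 := by
    rw [hS1, hA, hB, hG1]
    have e1 : t ^ (-4 : ℤ) * t ^ ((N : ℤ) ^ 2 + 4) = t ^ ((N : ℤ) ^ 2) := by
      rw [← hmul]
      exact heq _ _ ⟨0, by ring⟩
    linear_combination -e1
  -- conjugation facts
  have hconj : (starRingEnd ℂ) t = t⁻¹ := by
    rw [ht, ← Complex.exp_conj, ← Complex.exp_neg]
    congr 1
    simp [map_div₀, map_ofNat]
    ring
  have hconjz : ∀ k : ℤ, (starRingEnd ℂ) (t ^ k) = t ^ (-k) := by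
    intro k
    rw [map_zpow₀, hconj, inv_zpow, ← zpow_neg]
  have hGconj : (starRingEnd ℂ) G1 = ∑ r ∈ Finset.range N, t ^ (-((2 * (r : ℤ) + 1) ^ 2)) := by
    rw [hG1def, map_sum]
    exact Finset.sum_congr rfl fun r _ => hconjz _
  have hper : ∀ s : ℕ, t ^ ((2 * (((s + N : ℕ)) : ℤ) + 1) ^ 2) = t ^ ((2 * (s : ℤ) + 1) ^ 2) := by
    intro s
    refine heq _ _ ⟨2 * (s : ℤ) + 1 + N, ?_⟩
    push_cast
    ring
  have hGG : G1 * (starRingEnd ℂ) G1 = (N : ℂ) := by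
    rw [hGconj, Finset.mul_sum]
    have step1 : ∀ r ∈ Finset.range N, G1 * t ^ (-((2 * (r : ℤ) + 1) ^ 2))
        = ∑ s ∈ Finset.range N, t ^ (4 * (s : ℤ) ^ 2 + 4 * (s : ℤ)) * (t ^ (8 * (s : ℤ))) ^ r := by
      intro r _
      have hsh := sum_shift (fun u : ℕ => t ^ ((2 * (u : ℤ) + 1) ^ 2)) N
        (fun s => hper s) r
      beta_reduce at hsh
      rw [hG1def, ← hsh, Finset.sum_mul]
      refine Finset.sum_congr rfl fun s _ => ?_
      have hp : (t ^ (8 * (s : ℤ))) ^ (r : ℕ) = t ^ (8 * (s : ℤ) * r) := by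
        rw [← zpow_natCast (t ^ (8 * (s : ℤ))) r, ← zpow_mul]
      rw [hp, ← hmul, ← hmul]
      exact heq _ _ ⟨0, by push_cast; ring⟩
    rw [Finset.sum_congr rfl step1, Finset.sum_comm]
    have step2 : ∀ s : ℕ, (∑ r ∈ Finset.range N, t ^ (4 * (s : ℤ) ^ 2 + 4 * (s : ℤ)) * (t ^ (8 * (s : ℤ))) ^ r)
        = t ^ (4 * (s : ℤ) ^ 2 + 4 * (s : ℤ)) * ∑ r ∈ Finset.range N, (t ^ (8 * (s : ℤ))) ^ r := by
      intro s
      rw [Finset.mul_sum]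
    rw [Finset.sum_congr rfl fun s _ => step2 s]
    rw [Finset.sum_eq_single 0]
    · norm_num
    · intro s hs hs0
      have hsN : s < N := Finset.mem_range.1 hs
      have hspos : 0 < s := Nat.pos_of_ne_zero hs0
      have hxN : (t ^ (8 * (s : ℤ))) ^ N = 1 := by
        rw [← zpow_natCast (t ^ (8 * (s : ℤ))) N, ← zpow_mul]
        exact (hone _).2 ⟨2 * (s : ℤ), by push_cast; ring⟩
      have hx1 : t ^ (8 * (s : ℤ)) ≠ 1 := by
        intro hx
        obtain ⟨c, hc⟩ := (hone _).1 hx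
        have h2s : (N : ℤ) ∣ 2 * (s : ℤ) := ⟨c, by linarith⟩
        have hdvd2 : N ∣ 2 * s := by exact_mod_cast h2s
        have hcop : Nat.Coprime N 2 := by
          exact Nat.coprime_two_right.2 ⟨M, by omega⟩
        have hNs : N ∣ s := hcop.dvd_of_dvd_mul_left hdvd2
        have := Nat.le_of_dvd hspos hNs
        omega
      rw [geom_sum_eq hx1, hxN]
      simp
    · intro h0
      exact absurd (Finset.mem_range.2 (by omega)) h0
  have hNR : (0 : ℝ) < N := by positivity
  have habsG : ‖G1‖ = Real.sqrt N := by
    have h2 : Complex.normSq G1 = (N : ℝ) := by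
      have h3 := (Complex.mul_conj G1).symm.trans hGG
      exact_mod_cast h3
    rw [Complex.norm_def, h2]
  have hsinpos : 0 < Real.sin (Real.pi / N) := by
    apply Real.sin_pos_of_pos_of_lt_pi
    · positivity
    · apply div_lt_self Real.pi_pos
      exact_mod_cast (by omega : 1 < N)
  have habs4 : ‖t ^ (-4 : ℤ) - 1‖ = 2 * Real.sin (Real.pi / N) := by
    set w : ℝ := Real.pi / N with hw
    have e1 : Complex.exp (-(w : ℂ) * I) * Complex.exp (-(w : ℂ) * I) = t ^ (-4 : ℤ) := by
      rw [ht, ← Complex.exp_int_mul, ← Complex.exp_add]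
      congr 1
      rw [hw]
      push_cast
      field_simp
      ring
    have e2 : Complex.exp (-(w : ℂ) * I) * Complex.exp ((w : ℂ) * I) = 1 := by
      rw [← Complex.exp_add, show -(w : ℂ) * I + (w : ℂ) * I = 0 by ring, Complex.exp_zero]
    have hsin : Complex.exp (-(w : ℂ) * I) - Complex.exp ((w : ℂ) * I)
        = -2 * I * ((Real.sin w : ℝ) : ℂ) := by
      rw [Complex.ofReal_sin, Complex.sin]
      linear_combination (Complex.exp (-(w : ℂ) * I) - Complex.exp ((w : ℂ) * I)) * Complex.I_sq
    have hfac : t ^ (-4 : ℤ) - 1 = Complex.exp (-(w : ℂ) * I) * (-2 * I * ((Real.sin w : ℝ) : ℂ)) := by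
      rw [← hsin]
      linear_combination -e1 + e2
    rw [hfac, norm_mul]
    have ha1 : ‖Complex.exp (-(w : ℂ) * I)‖ = 1 := by
      rw [Complex.norm_exp]
      simp
    have ha2 : ‖-2 * I * ((Real.sin w : ℝ) : ℂ)‖ = 2 * Real.sin w := by
      rw [norm_mul, norm_mul, Complex.norm_real, Real.norm_eq_abs, _root_.abs_of_nonneg hsinpos.le]
      norm_num [Complex.norm_I]
    rw [ha1, ha2, one_mul]
  constructor
  · rw [hS, norm_mul, habs4, habsG]
    ring
  · rw [hS]
    refine mul_ne_zero ?_ ?_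
    · intro h0
      have := habs4
      rw [h0, norm_zero] at this
      nlinarith [Real.sqrt_pos.2 hNR]
    · intro h0
      have := habsG
      rw [h0, norm_zero] at this
      have hsq : 0 < Real.sqrt N := Real.sqrt_pos.2 hNR
      linarith
end
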